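/- (Chang's inequality) Let h : {-1,1}^n → {0,1} and α = Pr[h(X)=1] with 0 < α ≤ 1. Then Σ_{k=1}^n ĥ({k})² ≤ 2α² log(1/α), where log is the natural logarithm. -/

import Mathlib

open Finset Real
open scoped Classical

/-- The real value of a coordinate: `true ↦ 1`, `false ↦ -1`, encoding `{-1,1}`. -/
noncomputable def chi (b : Bool) : ℝ := if b then 1 else -1

/-- Expectation with respect to the uniform measure on `{-1,1}^n`. -/
noncomputable def Ex (n : ℕ) (φ : (Fin n → Bool) → ℝ) : ℝ :=
  (∑ x : Fin n → Bool, φ x) / 2 ^ n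

/-- Probability with respect to the uniform measure on `{-1,1}^n`. -/
noncomputable def Pr (n : ℕ) (p : (Fin n → Bool) → Prop) : ℝ :=
  Ex n (fun x => if p x then 1 else 0)

/-- Expectation for two independent uniform vectors on `{-1,1}^n`. -/
noncomputable def Ex2 (n : ℕ) (φ : (Fin n → Bool) → (Fin n → Bool) → ℝ) : ℝ :=
  (∑ x : Fin n → Bool, ∑ y : Fin n → Bool, φ x y) / 2 ^ (2 * n)

/-- Probability for two independent uniform vectors on `{-1,1}^n`. -/
noncomputable def Pr2 (n : ℕ) (p : (Fin n → Bool) → (Fin n → Bool) → Prop) : ℝ :=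
  Ex2 n (fun x y => if p x y then 1 else 0)

/-- Fourier coefficient `ĥ(S) = E[h(X)·∏_{i∈S} X_i]`. -/
noncomputable def coeff (n : ℕ) (h : (Fin n → Bool) → ℝ) (S : Finset (Fin n)) : ℝ :=
  Ex n (fun x => h x * ∏ i ∈ S, chi (x i))

/-- Pointwise negation `x ↦ -x` on `{-1,1}^n`. -/
def neg (n : ℕ) (x : Fin n → Bool) : Fin n → Bool := fun i => !(x i)

lemma Ex_mono {n : ℕ} {f g : (Fin n → Bool) → ℝ} (hfg : ∀ x, f x ≤ g x) :
    Ex n f ≤ Ex n g := by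
  unfold Ex; gcongr with x; exact hfg x

lemma Ex_sum {n : ℕ} (f : Fin n → (Fin n → Bool) → ℝ) :
    Ex n (fun x => ∑ k : Fin n, f k x) = ∑ k : Fin n, Ex n (f k) := by
  unfold Ex; rw [Finset.sum_comm, ← Finset.sum_div]

lemma Ex_const_mul {n : ℕ} (c : ℝ) (f : (Fin n → Bool) → ℝ) :
    Ex n (fun x => c * f x) = c * Ex n f := by
  unfold Ex; rw [← Finset.mul_sum, mul_div_assoc]

lemma Ex_add {n : ℕ} (f g : (Fin n → Bool) → ℝ) :
    Ex n (fun x => f x + g x) = Ex n f + Ex n g := by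
  unfold Ex; rw [Finset.sum_add_distrib, add_div]

lemma Ex_congr {n : ℕ} {f g : (Fin n → Bool) → ℝ} (hfg : ∀ x, f x = g x) :
    Ex n f = Ex n g := by
  unfold Ex; congr 1; exact Finset.sum_congr rfl fun x _ => hfg x

lemma Ex_prod_factor {n : ℕ} (g : Fin n → Bool → ℝ) :
    Ex n (fun x => ∏ k : Fin n, g k (x k)) = ∏ k : Fin n, ((g k true + g k false) / 2) := by
  unfold Ex
  rw [← Fintype.piFinset_univ, ← Finset.prod_univ_sum]
  rw [Finset.prod_div_distrib, Finset.prod_const, Finset.card_univ, Fintype.card_fin]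
  congr 1
  exact Finset.prod_congr rfl fun k _ => by simp

/-- Chang's inequality: Σ_k ĥ({k})² ≤ 2α² log(1/α). -/
theorem stmt7 (n : ℕ) (h : (Fin n → Bool) → ℝ)
    (hval : ∀ x, h x = 0 ∨ h x = 1) (α : ℝ)
    (hα : α = Pr n (fun x => h x = 1)) (hpos : 0 < α) (hle : α ≤ 1) :
    ∑ k : Fin n, (coeff n h {k}) ^ 2 ≤ 2 * α ^ 2 * Real.log (1 / α) := by
  set a : Fin n → ℝ := fun k => coeff n h {k} with ha
  set W : ℝ := ∑ k : Fin n, (a k) ^ 2 with hWdef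
  set L : (Fin n → Bool) → ℝ := fun x => ∑ k : Fin n, a k * chi (x k) with hL
  -- E[h] = α
  have hEh : Ex n h = α := by
    rw [hα]; unfold Pr
    apply Ex_congr
    intro x
    rcases hval x with h0 | h0 <;> simp [h0]
  -- E[h·L] = W
  have hW : Ex n (fun x => h x * L x) = W := by
    have : ∀ x, h x * L x = ∑ k : Fin n, a k * (h x * chi (x k)) := by
      intro x; rw [hL]; simp only [Finset.mul_sum]; apply Finset.sum_congr rfl
      intro k _; ring
    rw [Ex_congr this, Ex_sum]
    apply Finset.sum_congr rfl
    intro k _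
    rw [Ex_const_mul]
    have : Ex n (fun x => h x * chi (x k)) = a k := by
      rw [ha]; unfold coeff; apply Ex_congr; intro x; simp
    rw [this, sq]
  set M : ℝ := Ex n (fun x => Real.exp ((1 / α) * L x)) with hM
  have hMprod : M = ∏ k : Fin n, Real.cosh ((1 / α) * a k) := by
    rw [hM]
    have : ∀ x, Real.exp ((1 / α) * L x)
        = ∏ k : Fin n, Real.exp ((1 / α) * a k * chi (x k)) := by
      intro x
      rw [← Real.exp_sum]
      congr 1
      rw [hL, Finset.mul_sum]
      exact Finset.sum_congr rfl fun k _ => by ring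
    rw [Ex_congr this, Ex_prod_factor (fun k b => Real.exp ((1 / α) * a k * chi b))]
    apply Finset.prod_congr rfl
    intro k _
    simp [chi, Real.cosh_eq]
  have hcoshpos : ∀ k : Fin n, (0:ℝ) < Real.cosh ((1 / α) * a k) := fun k => Real.cosh_pos _
  have hMpos : 0 < M := by
    rw [hMprod]; exact Finset.prod_pos fun k _ => hcoshpos k
  have hMle : M ≤ Real.exp (W / (2 * α ^ 2)) := by
    rw [hMprod]
    calc ∏ k : Fin n, Real.cosh ((1 / α) * a k)
        ≤ ∏ k : Fin n, Real.exp (((1 / α) * a k) ^ 2 / 2) := by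
          apply Finset.prod_le_prod (fun k _ => (hcoshpos k).le)
          intro k _; exact Real.cosh_le_exp_half_sq _
      _ = Real.exp (∑ k : Fin n, ((1 / α) * a k) ^ 2 / 2) := (Real.exp_sum _ _).symm
      _ = Real.exp (W / (2 * α ^ 2)) := by
          congr 1
          rw [hWdef, Finset.sum_div]
          apply Finset.sum_congr rfl
          intro k _
          field_simp
  -- pointwise inequality
  have hpoint : ∀ x, h x * ((1 / α) * L x)
      ≤ h x * (Real.log (M / α) - 1) + (α / M) * Real.exp ((1 / α) * L x) := by
    intro x
    rcases hval x with h0 | h1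
    · rw [h0]; simp; positivity
    · rw [h1]; simp only [one_mul]
      set u : ℝ := (1 / α) * L x
      have key : (u - Real.log (M / α)) + 1 ≤ Real.exp (u - Real.log (M / α)) :=
        Real.add_one_le_exp _
      have hexp : Real.exp (u - Real.log (M / α)) = (α / M) * Real.exp u := by
        rw [Real.exp_sub, Real.exp_log (by positivity)]
        field_simp
      rw [hexp] at key
      linarith
  -- take expectations
  have hfinal : (1 / α) * W ≤ α * (Real.log (M / α) - 1) + (α / M) * M := by
    have lhs : Ex n (fun x => (1 / α) * (h x * L x)) = (1 / α) * W := by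
      rw [Ex_const_mul, hW]
    have rhs : Ex n (fun x => h x * (Real.log (M / α) - 1)
        + (α / M) * Real.exp ((1 / α) * L x))
        = α * (Real.log (M / α) - 1) + (α / M) * M := by
      rw [Ex_add, Ex_const_mul, hM]
      congr 1
      have : Ex n (fun x => h x * (Real.log (M / α) - 1))
          = Ex n (fun x => (Real.log (M / α) - 1) * h x) := Ex_congr fun x => by ring
      rw [this, Ex_const_mul, hEh]
      ring
    calc (1 / α) * W = Ex n (fun x => (1 / α) * (h x * L x)) := lhs.symm
      _ ≤ Ex n (fun x => h x * (Real.log (M / α) - 1)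
          + (α / M) * Real.exp ((1 / α) * L x)) := by
          apply Ex_mono
          intro x
          have := hpoint x
          linarith [hpoint x, mul_comm (h x) ((1/α) * L x)]
      _ = _ := rhs
  have hlogM : Real.log M ≤ W / (2 * α ^ 2) := by
    calc Real.log M ≤ Real.log (Real.exp (W / (2 * α ^ 2))) :=
          Real.log_le_log hMpos hMle
      _ = W / (2 * α ^ 2) := Real.log_exp _
  have hlogdiv : Real.log (M / α) = Real.log M - Real.log α := Real.log_div (ne_of_gt hMpos) (ne_of_gt hpos)
  have hloginv : Real.log (1 / α) = - Real.log α := by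
    rw [one_div, Real.log_inv]
  have hdivM : (α / M) * M = α := by field_simp
  rw [hdivM, hlogdiv] at hfinal
  rw [hloginv]
  have hW2 : (1/α) * W ≤ α * (W / (2 * α ^ 2)) + α * (- Real.log α) := by
    nlinarith [hfinal, hlogM, hpos]
  have : α * (W / (2 * α ^ 2)) = W / (2 * α) := by
    field_simp
  rw [this] at hW2
  show W ≤ 2 * α ^ 2 * (- Real.log α)
  have h1 : (1/α) * W - W / (2*α) = W / (2*α) := by field_simp; ring
  have h3 : W / (2*α) ≤ α * (-Real.log α) := by linarith
  have h4 := mul_le_mul_of_nonneg_right h3 (by positivity : (0:ℝ) ≤ 2*α)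
  have h5 : W / (2*α) * (2*α) = W := by field_simp
  rw [h5] at h4
  nlinarith [h4]
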